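/- Let p be an odd prime and let λ_1 > λ_2 ≥ 1 be integers. Then λ_2 ∈ Ψ_p(λ_1 − λ_2) if and only if either λ_1 ≡ −1 (mod p^{l_p(λ_2)}) or (λ_1, λ_2) satisfies condition (ii). (This is the combinatorial content of Proposition 5.4, which characterizes when H^1(Σ_d, S^{(λ_1,λ_2)}) is nonzero.) -/

import Mathlib

/-- The `i`-th base-`p` digit of `r`. -/
def pdigit (p r i : ℕ) : ℕ := (r / p ^ i) % p

/-- For a base-`p` digit `a`, `pbar p a = p - 1 - a` is the unique `a̅` with
`0 ≤ a̅ ≤ p - 1` and `a + a̅ ≡ p - 1 (mod p)`. -/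
def pbar (p a : ℕ) : ℕ := p - 1 - a

/-- Erdmann's set `Ψ_p(r)`. -/
def Psi (p r : ℕ) : Set ℕ :=
  {m | ∃ u a : ℕ, 1 ≤ a ∧ pdigit p r u ≠ p - 1 ∧
        m = (∑ i ∈ Finset.range u, pbar p (pdigit p r i) * p ^ i) + p ^ (u + a)} ∪
  {m | ∃ u : ℕ, pdigit p r u ≠ p - 1 ∧
        m = ∑ i ∈ Finset.range (u + 1), pbar p (pdigit p r i) * p ^ i}

/-- `lpexp p t` is the least nonnegative integer `l` with `t < p ^ l`. -/
noncomputable def lpexp (p t : ℕ) : ℕ := sInf {l : ℕ | t < p ^ l}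

/-- Condition (ii) of Proposition 5.4. -/
def CondII (p l1 l2 : ℕ) : Prop :=
  ∃ u : ℕ, p ^ u ∣ l1 + 1 ∧ ¬ p ^ (u + 1) ∣ l1 + 1 ∧
    ∃ c b : ℕ, c < p ^ u ∧ u < b ∧ l2 = c + p ^ b


lemma mod_pow_succ' (p r n : ℕ) : r % p ^ (n+1) = r % p ^ n + p ^ n * pdigit p r n := by
  rw [pdigit, pow_succ]; exact Nat.mod_mul

lemma pow_mul_pred (p u : ℕ) (hp : 1 ≤ p) : p ^ u * (p - 1) + p ^ u = p ^ (u+1) := by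
  obtain ⟨q, rfl⟩ := Nat.exists_eq_add_of_le hp
  have h1 : 1 + q - 1 = q := by omega
  rw [h1, pow_succ]
  ring

lemma sum_pbar (p : ℕ) (hp : 1 < p) (r n : ℕ) :
    (∑ i ∈ Finset.range n, pbar p (pdigit p r i) * p ^ i) = p ^ n - 1 - r % p ^ n := by
  induction n with
  | zero => simp
  | succ n ih =>
    rw [Finset.sum_range_succ, ih, mod_pow_succ']
    have hd : pdigit p r n < p := Nat.mod_lt _ (by omega)
    have hm : r % p ^ n < p ^ n := Nat.mod_lt _ (Nat.pow_pos (n := n) (by omega))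
    obtain ⟨m, hmm⟩ : ∃ m, r % p ^ n = m := ⟨_, rfl⟩
    rw [hmm] at hm ⊢
    have e1 : pbar p (pdigit p r n) * p ^ n = (p-1) * p^n - pdigit p r n * p ^ n := by
      rw [pbar, Nat.sub_mul]
    have e2 : (p-1) * p ^ n + p ^ n = p * p^n := by
      rw [Nat.sub_mul, one_mul]
      have : p ^ n ≤ p * p ^ n := Nat.le_mul_of_pos_left _ (by omega)
      omega
    have e3 : pdigit p r n * p ^ n ≤ (p-1) * p^n := Nat.mul_le_mul_right _ (by omega)
    have e4 : pdigit p r n * p ^ n = p ^ n * pdigit p r n := Nat.mul_comm _ _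
    have e5 : p ^ (n+1) = p * p ^ n := by rw [pow_succ, Nat.mul_comm]
    omega

lemma mod_eq_pred_iff (p : ℕ) (hp : 1 < p) (x : ℕ) : p ∣ (1 + x) ↔ x % p = p - 1 := by
  have hdm := Nat.div_add_mod x p
  obtain ⟨e, he⟩ : ∃ e, x / p = e := ⟨_, rfl⟩
  rw [he] at hdm
  constructor
  · rintro ⟨k, hk⟩
    match k with
    | 0 => omega
    | k+1 =>
      have hx : x = p * k + (p - 1) := by
        have hk' : p * (k+1) = p * k + p := by ring
        omega
      rw [hx, Nat.mul_add_mod]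
      exact Nat.mod_eq_of_lt (by omega)
  · intro h
    rw [h] at hdm
    refine ⟨e + 1, ?_⟩
    have : p * (e + 1) = p * e + p := by ring
    omega

lemma digits_split (p n r : ℕ) (hp : 0 < p) :
    ∃ q m, r = p ^ n * q + m ∧ m < p ^ n ∧ r % p ^ n = m ∧ r / p ^ n = q :=
  ⟨r / p ^ n, r % p ^ n, (Nat.div_add_mod r (p ^ n)).symm,
    Nat.mod_lt _ (Nat.pow_pos (n := n) hp), rfl, rfl⟩

lemma lt_pow_lpexp (p t : ℕ) (hp : 1 < p) : t < p ^ lpexp p t := by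
  have h : sInf {l : ℕ | t < p ^ l} ∈ {l : ℕ | t < p ^ l} :=
    Nat.sInf_mem ⟨t, Nat.lt_pow_self (n := t) hp⟩
  exact h

lemma lpexp_le {p t l : ℕ} (h : t < p ^ l) : lpexp p t ≤ l :=
  Nat.sInf_le (show l ∈ {l : ℕ | t < p ^ l} from h)

lemma pow_le_of_lt_lpexp {p t l : ℕ} (h : l < lpexp p t) : p ^ l ≤ t := by
  by_contra hc
  push_neg at hc
  have h2 := Nat.sInf_le (show l ∈ {l : ℕ | t < p ^ l} from hc)
  rw [lpexp] at h
  omega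

theorem mem_Psi_iff_james_or_condII (p l1 l2 : ℕ) (hp : p.Prime) (hodd : Odd p)
    (h12 : l2 < l1) (h2 : 1 ≤ l2) :
    l2 ∈ Psi p (l1 - l2) ↔ (p ^ lpexp p l2 ∣ l1 + 1 ∨ CondII p l1 l2) := by
  have hp1 : 1 < p := hp.one_lt
  set r := l1 - l2 with hr
  have hlr : l2 + r = l1 := by omega
  simp only [Psi, Set.mem_union, Set.mem_setOf_eq, CondII]
  constructor
  · rintro (⟨u, a, ha, hdu, hl2⟩ | ⟨u, hdu, hl2⟩)
    · -- part A ⇒ CondII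
      right
      rw [sum_pbar p hp1] at hl2
      obtain ⟨q, m, hqm, hmlt, hmod, hdiv⟩ := digits_split p u r (by omega)
      rw [hmod] at hl2
      have hl1 : l1 + 1 = p ^ u * (1 + q) + p ^ (u + a) := by
        have e : p ^ u * (1 + q) = p ^ u + p ^ u * q := by ring
        omega
      refine ⟨u, ?_, ?_, p ^ u - 1 - m, u + a, by omega, by omega, hl2⟩
      · rw [hl1]; exact dvd_add (dvd_mul_right _ _) (pow_dvd_pow p (by omega))
      · intro hcon
        have hsplit : p ^ (u + a) = p ^ u * p ^ a := pow_add p u a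
        have hl1' : l1 + 1 = p ^ u * (1 + q + p ^ a) := by rw [hl1, hsplit]; ring
        rw [hl1', pow_succ] at hcon
        have hpd : p ∣ 1 + q + p ^ a :=
          (mul_dvd_mul_iff_left (a := p ^ u) (by positivity)).mp hcon
        have hpa : p ∣ p ^ a := dvd_pow_self p (by omega)
        have h3 := Nat.dvd_sub hpd hpa
        have heq : 1 + q + p ^ a - p ^ a = 1 + q := by omega
        rw [heq] at h3
        have hq := (mod_eq_pred_iff p hp1 _).mp h3
        apply hdu
        rw [pdigit, hdiv, hq]
    · -- part B ⇒ divisibility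
      left
      rw [sum_pbar p hp1] at hl2
      obtain ⟨q, m, hqm, hmlt, hmod, hdiv⟩ := digits_split p (u+1) r (by omega)
      rw [hmod] at hl2
      have hl2lt : l2 < p ^ (u+1) := by omega
      have hle : lpexp p l2 ≤ u + 1 := lpexp_le hl2lt
      have hdvd : p ^ (u+1) ∣ l1 + 1 := by
        refine ⟨1 + q, ?_⟩
        have e : p ^ (u+1) * (1 + q) = p ^ (u+1) + p ^ (u+1) * q := by ring
        omega
      exact dvd_trans (pow_dvd_pow p hle) hdvd
  · rintro (hdvd | ⟨u, hu, hnu, c, b, hc, hub, hl2⟩)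
    · -- divisibility ⇒ part B
      right
      have hmemL : l2 < p ^ lpexp p l2 := lt_pow_lpexp p l2 hp1
      have hL1 : 1 ≤ lpexp p l2 := by
        rcases Nat.eq_zero_or_pos (lpexp p l2) with h0 | h
        · rw [h0, pow_zero] at hmemL; omega
        · exact h
      obtain ⟨u, hLu⟩ : ∃ u, lpexp p l2 = u + 1 := ⟨lpexp p l2 - 1, by omega⟩
      rw [hLu] at hdvd hmemL
      have hgeu : p ^ u ≤ l2 := pow_le_of_lt_lpexp (by omega)
      obtain ⟨q1, m1, hqm1, hmlt1, hmod1, hdiv1⟩ := digits_split p (u+1) r (by omega)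
      obtain ⟨q, m, hqm, hmlt, hmod, hdiv⟩ := digits_split p u r (by omega)
      have hx : p ^ (u+1) ∣ l2 + m1 + 1 := by
        have h3 := Nat.dvd_sub hdvd (dvd_mul_right (p ^ (u+1)) q1)
        have heq : l1 + 1 - p ^ (u+1) * q1 = l2 + m1 + 1 := by omega
        rwa [heq] at h3
      have hxx : l2 + m1 + 1 = p ^ (u+1) :=
        Nat.eq_of_dvd_of_lt_two_mul (by omega) hx (by omega)
      refine ⟨u, ?_, ?_⟩
      · intro hcon
        have hms := mod_pow_succ' p r u
        rw [hmod1, hmod, hcon] at hms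
        have hpm := pow_mul_pred p u (by omega)
        omega
      · rw [sum_pbar p hp1, hmod1]; omega
    · -- CondII ⇒ part A
      left
      obtain ⟨q, m, hqm, hmlt, hmod, hdiv⟩ := digits_split p u r (by omega)
      have hbd : p ^ u ∣ p ^ b := pow_dvd_pow p (le_of_lt hub)
      have hx : p ^ u ∣ c + m + 1 := by
        have h3 := Nat.dvd_sub (Nat.dvd_sub hu hbd) (dvd_mul_right (p ^ u) q)
        have heq : l1 + 1 - p ^ b - p ^ u * q = c + m + 1 := by omega
        rwa [heq] at h3
      have hc1 : c + m + 1 = p ^ u :=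
        Nat.eq_of_dvd_of_lt_two_mul (by omega) hx (by omega)
      refine ⟨u, b - u, by omega, ?_, ?_⟩
      · intro hcon
        apply hnu
        rw [pdigit, hdiv] at hcon
        have hpd : p ∣ 1 + q := (mod_eq_pred_iff p hp1 _).mpr hcon
        have hl1' : l1 + 1 = p ^ u * (1 + q) + p ^ b := by
          have e : p ^ u * (1 + q) = p ^ u + p ^ u * q := by ring
          omega
        rw [hl1', pow_succ]
        refine dvd_add (mul_dvd_mul_left _ hpd) ?_
        rw [← pow_succ]
        exact pow_dvd_pow p hub
      · rw [sum_pbar p hp1, hmod]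
        have hb : u + (b - u) = b := by omega
        rw [hb]
        omega
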